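/- For every K > 2 and every K-AND-OR-BN F on n nodes, if F is observable with an observation set of size m, then (m : ℝ) ≥ ((1 − K) + ((2^K − 1)/2^K) * Real.logb 2 (2^K − 1)) * n. -/

import Mathlib

/-- `F` is observable with observation set `S` if the map from an initial state to its
output sequence (the restriction of each iterate to `S`) is injective. -/
def observable {n : ℕ} (F : (Fin n → Bool) → (Fin n → Bool)) (S : Finset (Fin n)) : Prop :=
  Function.Injective (fun (x : Fin n → Bool) => fun (t : ℕ) (i : S) => (F^[t] x) i.val)

/-- `F` is a `K`-AND-OR-BN: each local function is the AND or the OR of `K` literals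
on pairwise distinct variables (a literal is `x_{i_j} XOR b_j`). -/
def isAndOrBN {n : ℕ} (K : ℕ) (F : (Fin n → Bool) → (Fin n → Bool)) : Prop :=
  ∀ i : Fin n, ∃ idx : Fin K → Fin n, Function.Injective idx ∧ ∃ b : Fin K → Bool,
    (∀ x, F x i = Finset.univ.inf (fun j => Bool.xor (x (idx j)) (b j))) ∨
    (∀ x, F x i = Finset.univ.sup (fun j => Bool.xor (x (idx j)) (b j)))

section Aux
open Real Finset

lemma gibbs {α : Type*} (E : Finset α) (hE : E.Nonempty)
    (w : α → ℝ) (hw : ∀ y ∈ E, 0 < w y) (hsum : ∑ y ∈ E, w y ≤ 1) :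
    (E.card : ℝ) * Real.log E.card + ∑ y ∈ E, Real.log (w y) ≤ 0 := by
  have hN : (0:ℝ) < E.card := by exact_mod_cast Finset.card_pos.mpr hE
  have key : ∀ y ∈ E, Real.log (E.card : ℝ) + Real.log (w y) ≤ (E.card : ℝ) * w y - 1 := by
    intro y hy
    calc Real.log (E.card : ℝ) + Real.log (w y) = Real.log ((E.card : ℝ) * w y) := by
          rw [Real.log_mul (ne_of_gt hN) (ne_of_gt (hw y hy))]
      _ ≤ (E.card : ℝ) * w y - 1 := Real.log_le_sub_one_of_pos (mul_pos hN (hw y hy))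
  have h2 : ∑ y ∈ E, (Real.log (E.card : ℝ) + Real.log (w y)) ≤
      ∑ y ∈ E, ((E.card : ℝ) * w y - 1) := Finset.sum_le_sum key
  rw [Finset.sum_add_distrib, Finset.sum_const, Finset.sum_sub_distrib, Finset.sum_const,
    ← Finset.mul_sum] at h2
  simp only [nsmul_eq_mul] at h2
  nlinarith [hsum, hN]

lemma entropy_subadd {ι : Type*} [Fintype ι] [DecidableEq ι]
    (E : Finset (ι → Bool)) (hE : E.Nonempty) :
    Real.log E.card ≤ ∑ i : ι, ∑ b : Bool,
      Real.negMulLog (((E.filter (fun y => y i = b)).card : ℝ) / E.card) := by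
  classical
  set N : ℝ := (E.card : ℝ) with hNdef
  have hN : (0:ℝ) < N := by rw [hNdef]; exact_mod_cast Finset.card_pos.mpr hE
  set r : ι → Bool → ℝ := fun i b => ((E.filter (fun y => y i = b)).card : ℝ) / N with hr
  have hrpos : ∀ (y : ι → Bool), y ∈ E → ∀ i, 0 < r i (y i) := by
    intro y hy i
    have : y ∈ E.filter (fun z => z i = y i) := Finset.mem_filter.mpr ⟨hy, rfl⟩
    have hc : 0 < (E.filter (fun z => z i = y i)).card := Finset.card_pos.mpr ⟨y, this⟩
    exact div_pos (by exact_mod_cast hc) hN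
  have hrnonneg : ∀ i b, 0 ≤ r i b := fun i b => div_nonneg (by positivity) hN.le
  set w : (ι → Bool) → ℝ := fun y => ∏ i : ι, r i (y i) with hw
  have hsum_c : ∀ i : ι, ∑ b : Bool, r i b = 1 := by
    intro i
    rw [Fintype.sum_bool, hr]
    have h0 : (E.filter (fun y => y i = true)).card + (E.filter (fun y => y i = false)).card
        = E.card := by
      have h1 := Finset.card_filter_add_card_filter_not (s := E)
        (p := fun y => y i = true)
      simpa using h1
    have h' : ((E.filter (fun y => y i = true)).card : ℝ)
        + ((E.filter (fun y => y i = false)).card : ℝ) = N := by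
      rw [hNdef]; exact_mod_cast h0
    field_simp
    linarith
  have hwsum : ∑ y ∈ E, w y ≤ 1 := by
    have h1 : ∑ y ∈ E, w y ≤ ∑ y : ι → Bool, w y := by
      apply Finset.sum_le_sum_of_subset_of_nonneg (Finset.subset_univ E)
      intro y _ _
      exact Finset.prod_nonneg fun i _ => hrnonneg i (y i)
    have h2 : ∑ y : ι → Bool, w y = ∏ i : ι, ∑ b : Bool, r i b :=
      (Fintype.prod_sum _).symm
    have h3 : (∏ i : ι, ∑ b : Bool, r i b) = 1 :=
      Finset.prod_eq_one (fun i _ => hsum_c i)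
    rw [h2, h3] at h1
    exact h1
  have hg := gibbs E hE w (fun y hy => Finset.prod_pos (fun i _ => hrpos y hy i)) hwsum
  -- rewrite Σ log w
  have hlogw : ∑ y ∈ E, Real.log (w y) = ∑ i : ι, ∑ y ∈ E, Real.log (r i (y i)) := by
    rw [Finset.sum_comm]
    apply Finset.sum_congr rfl
    intro y hy
    exact Real.log_prod (fun i _ => ne_of_gt (hrpos y hy i))
  have hfiber : ∀ i : ι, ∑ y ∈ E, Real.log (r i (y i))
      = ∑ b : Bool, ((E.filter (fun y => y i = b)).card : ℝ) * Real.log (r i b) := by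
    intro i
    rw [← Finset.sum_fiberwise E (fun y => y i) (fun y => Real.log (r i (y i)))]
    apply Finset.sum_congr rfl
    intro b _
    rw [Finset.sum_congr rfl (fun y hy => by
      rw [(Finset.mem_filter.mp hy).2]), Finset.sum_const, nsmul_eq_mul]
  have hterm : ∀ i b, ((E.filter (fun y => y i = b)).card : ℝ) * Real.log (r i b)
      = -(N * Real.negMulLog (r i b)) := by
    intro i b
    rw [Real.negMulLog]
    have : ((E.filter (fun y => y i = b)).card : ℝ) = N * r i b := by
      rw [hr]; field_simp
    rw [this]; ring
  rw [hlogw] at hg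
  simp only [hfiber, hterm, Finset.sum_neg_distrib, ← Finset.mul_sum] at hg
  have : N * Real.log N ≤ N * ∑ i : ι, ∑ b : Bool, Real.negMulLog (r i b) := by linarith
  exact le_of_mul_le_mul_left (by linarith [this]) hN

lemma binEnt_le_log_two {p q : ℝ} (hp : 0 ≤ p) (hq : 0 ≤ q) (hpq : p + q = 1) :
    Real.negMulLog p + Real.negMulLog q ≤ Real.log 2 := by
  rcases eq_or_lt_of_le hp with h0 | hp0
  · have : q = 1 := by linarith
    simp [← h0, this]
    positivity
  rcases eq_or_lt_of_le hq with h0 | hq0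
  · have : p = 1 := by linarith
    simp [← h0, this]
    positivity
  have h1 : Real.log (1 / (2 * p)) ≤ 1 / (2 * p) - 1 :=
    Real.log_le_sub_one_of_pos (by positivity)
  have h2 : Real.log (1 / (2 * q)) ≤ 1 / (2 * q) - 1 :=
    Real.log_le_sub_one_of_pos (by positivity)
  rw [Real.log_div one_ne_zero (by positivity), Real.log_mul two_ne_zero (ne_of_gt hp0),
    Real.log_one] at h1
  rw [Real.log_div one_ne_zero (by positivity), Real.log_mul two_ne_zero (ne_of_gt hq0),
    Real.log_one] at h2
  have h1' : p * (0 - (Real.log 2 + Real.log p)) ≤ p * (1 / (2 * p) - 1) :=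
    mul_le_mul_of_nonneg_left h1 hp
  have h2' : q * (0 - (Real.log 2 + Real.log q)) ≤ q * (1 / (2 * q) - 1) :=
    mul_le_mul_of_nonneg_left h2 hq
  have e1 : p * (1 / (2 * p)) = 1 / 2 := by field_simp
  have e2 : q * (1 / (2 * q)) = 1 / 2 := by field_simp
  have h1'' := h1'
  rw [mul_sub, mul_sub, e1, mul_zero, mul_add] at h1''
  have h2'' := h2'
  rw [mul_sub, mul_sub, e2, mul_zero, mul_add] at h2''
  have key : p * Real.log 2 + q * Real.log 2 = Real.log 2 := by
    rw [← add_mul, hpq, one_mul]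
  simp only [Real.negMulLog]
  linarith [h1'', h2'', key]

theorem card_filter_fixed {n K : ℕ} (idx : Fin K → Fin n)
    (hinj : Function.Injective idx) (v : Fin K → Bool) :
    (Finset.univ.filter (fun x : Fin n → Bool => ∀ j, x (idx j) = v j)).card = 2 ^ (n - K) := by
  classical
  have h1 : (Finset.univ.filter (fun x : Fin n → Bool => ∀ j, x (idx j) = v j)).card
      = Fintype.card {x : Fin n → Bool // ∀ j, x (idx j) = v j} :=
    (Fintype.card_subtype _).symm
  rw [h1]
  have e : {x : Fin n → Bool // ∀ j, x (idx j) = v j} ≃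
      ({i : Fin n // ¬ ∃ j, idx j = i} → Bool) := by
    refine ⟨fun x i => x.1 i.1,
      fun f => ⟨fun i => if h : ∃ j, idx j = i then v h.choose else f ⟨i, h⟩, ?_⟩, ?_, ?_⟩
    · intro j
      have h : ∃ j', idx j' = idx j := ⟨j, rfl⟩
      simp only [h, dif_pos]
      have := h.choose_spec
      rw [hinj this]
    · rintro ⟨x, hx⟩
      ext i
      simp only
      by_cases h : ∃ j, idx j = i
      · simp only [h, dif_pos]
        rw [← hx h.choose, h.choose_spec]
      · simp only [h, dif_neg, not_false_iff]
    · intro f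
      ext ⟨i, hi⟩
      simp only [hi, dif_neg, not_false_iff]
  rw [Fintype.card_congr e, Fintype.card_fun, Fintype.card_bool]
  congr 1
  have hc : Fintype.card {i : Fin n // ∃ j, idx j = i} = K := by
    have h2 : Fintype.card {i : Fin n // ∃ j, idx j = i} = Fintype.card (Set.range idx) := by
      apply Fintype.card_congr
      exact Equiv.subtypeEquivRight (fun i => by simp [Set.mem_range, eq_comm])
    rw [h2, Set.card_range_of_injective hinj, Fintype.card_fin]
  have h3 := Fintype.card_subtype_compl (fun i : Fin n => ∃ j, idx j = i)
  rw [h3, hc, Fintype.card_fin]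

lemma filter_true_add_filter_false {n : ℕ} (f : (Fin n → Bool) → Bool) :
    (Finset.univ.filter (fun x : Fin n → Bool => f x = true)).card
      + (Finset.univ.filter (fun x : Fin n → Bool => f x = false)).card = 2 ^ n := by
  classical
  have h1 := Finset.card_filter_add_card_filter_not
    (s := (Finset.univ : Finset (Fin n → Bool))) (p := fun x => f x = true)
  have h2 : (Finset.univ.filter (fun x : Fin n → Bool => ¬ f x = true))
      = Finset.univ.filter (fun x : Fin n → Bool => f x = false) := by
    apply Finset.filter_congr; intro x _; simp
  rw [h2] at h1
  rw [h1, Finset.card_univ, Fintype.card_fun, Fintype.card_bool, Fintype.card_fin]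


end Aux

open Real Finset in
theorem K_and_or_lower_bound (n K m : ℕ) (hK : 2 < K)
    (F : (Fin n → Bool) → (Fin n → Bool)) (hF : isAndOrBN K F)
    (S : Finset (Fin n)) (hS : S.card = m) (hobs : observable F S) :
    (m : ℝ) ≥
      ((1 - (K : ℝ)) + (((2 : ℝ) ^ K - 1) / (2 : ℝ) ^ K) * Real.logb 2 ((2 : ℝ) ^ K - 1)) * n := by
  classical
  rcases Nat.eq_zero_or_pos n with hn | hn
  · subst hn
    simp only [Nat.cast_zero, mul_zero, ge_iff_le]
    exact Nat.cast_nonneg m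
  obtain ⟨idx0, hinj0, -⟩ := hF ⟨0, hn⟩
  have hKn : K ≤ n := by
    have := Fintype.card_le_of_injective idx0 hinj0
    simpa using this
  -- injective joint map
  set g : (Fin n → Bool) → (↥S ⊕ Fin n → Bool) :=
    fun x => Sum.elim (fun s => x s.1) (fun i => F x i) with hg
  have hginj : Function.Injective g := by
    intro x y hxy
    apply hobs
    funext t i
    cases t with
    | zero =>
        simpa [hg] using congrFun hxy (Sum.inl i)
    | succ t =>
        have hFxy : F x = F y := funext fun j => congrFun hxy (Sum.inr j)
        simp only [Function.iterate_succ_apply]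
        rw [hFxy]
  set E : Finset (↥S ⊕ Fin n → Bool) := Finset.univ.image g with hE
  have hEcard : E.card = 2 ^ n := by
    rw [hE, Finset.card_image_of_injective _ hginj, Finset.card_univ, Fintype.card_fun,
      Fintype.card_bool, Fintype.card_fin]
  have hEne : E.Nonempty := Finset.Nonempty.image Finset.univ_nonempty g
  have hmain := entropy_subadd E hEne
  have hfilter : ∀ (t : ↥S ⊕ Fin n) (b : Bool),
      (E.filter (fun y => y t = b)).card
        = (Finset.univ.filter (fun x : Fin n → Bool => g x t = b)).card := by
    intro t b
    rw [hE, Finset.filter_image, Finset.card_image_of_injective _ hginj]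
  have hsum2 : ∀ t : ↥S ⊕ Fin n,
      (Finset.univ.filter (fun x : Fin n → Bool => g x t = true)).card
        + (Finset.univ.filter (fun x : Fin n → Bool => g x t = false)).card = 2 ^ n :=
    fun t => filter_true_add_filter_false (fun x => g x t)
  rw [hEcard] at hmain
  simp only [hfilter] at hmain
  rw [Fintype.sum_sum_type] at hmain
  have h2nR : ((2:ℝ)) ^ n ≠ 0 := by positivity
  have hcast2n : (((2:ℕ) ^ n : ℕ) : ℝ) = (2:ℝ) ^ n := by push_cast; ring
  set P : ℝ := ((2:ℝ) ^ K)⁻¹ with hPdef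
  have hP0 : 0 < P := by positivity
  have hP1 : P < 1 := by
    rw [hPdef, inv_lt_one_iff₀]
    right
    exact one_lt_pow₀ (by norm_num) (by omega)
  have hpow : (2:ℝ) ^ (n - K) * (2:ℝ) ^ K = 2 ^ n := by
    rw [← pow_add, Nat.sub_add_cancel hKn]
  have hPcast : (((2:ℕ) ^ (n - K) : ℕ) : ℝ) / (((2:ℕ) ^ n : ℕ) : ℝ) = P := by
    rw [hcast2n]
    push_cast
    rw [← hpow, div_mul_eq_div_div, div_self (by positivity), one_div]
  have hle : (2:ℕ) ^ (n - K) ≤ 2 ^ n := Nat.pow_le_pow_right (by norm_num) (Nat.sub_le n K)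
  have hQcast : (((2:ℕ) ^ n - (2:ℕ) ^ (n - K) : ℕ) : ℝ) / (((2:ℕ) ^ n : ℕ) : ℝ)
      = 1 - P := by
    rw [Nat.cast_sub hle, sub_div, div_self (by rw [hcast2n]; positivity), hPcast]
  -- part 1 : observation coordinates
  have hpart1 : ∀ a : ↥S, (∑ b : Bool,
      Real.negMulLog (((Finset.univ.filter
        (fun x : Fin n → Bool => g x (Sum.inl a) = b)).card : ℝ) / (((2:ℕ) ^ n : ℕ) : ℝ)))
      ≤ Real.log 2 := by
    intro a
    rw [Fintype.sum_bool]
    have hsum := hsum2 (Sum.inl a)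
    apply binEnt_le_log_two
    · positivity
    · positivity
    · rw [← add_div, div_eq_one_iff_eq (by rw [hcast2n]; positivity)]
      exact_mod_cast hsum
  -- part 2 : dynamics coordinates
  have hxorT : ∀ a c : Bool, (Bool.xor a c = true) ↔ a = !c := by decide
  have hxorF : ∀ a c : Bool, (Bool.xor a c = false) ↔ a = c := by decide
  have hpart2 : ∀ i : Fin n, (∑ b : Bool,
      Real.negMulLog (((Finset.univ.filter
        (fun x : Fin n → Bool => g x (Sum.inr i) = b)).card : ℝ) / (((2:ℕ) ^ n : ℕ) : ℝ)))
      = Real.negMulLog P + Real.negMulLog (1 - P) := by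
    intro i
    rw [Fintype.sum_bool]
    obtain ⟨idx, hinj, bb, hca | hco⟩ := hF i
    · -- AND node : true-count is 2^(n-K)
      have hct : (Finset.univ.filter (fun x : Fin n → Bool => g x (Sum.inr i) = true)).card
          = 2 ^ (n - K) := by
        rw [show (Finset.univ.filter (fun x : Fin n → Bool => g x (Sum.inr i) = true))
            = Finset.univ.filter (fun x : Fin n → Bool => ∀ j, x (idx j) = !(bb j)) from ?_]
        · exact card_filter_fixed idx hinj _
        apply Finset.filter_congr
        intro x _
        simp only [hg, Sum.elim_inr, hca x]
        rw [show (true : Bool) = ⊤ from rfl, Finset.inf_eq_top_iff]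
        constructor
        · intro h j
          exact (hxorT _ _).mp (h j (Finset.mem_univ j))
        · intro h j _
          exact (hxorT _ _).mpr (h j)
      have hcf : (Finset.univ.filter (fun x : Fin n → Bool => g x (Sum.inr i) = false)).card
          = 2 ^ n - 2 ^ (n - K) := by
        have := hsum2 (Sum.inr i)
        omega
      rw [hct, hcf, hPcast, hQcast]
    · -- OR node : false-count is 2^(n-K)
      have hcf : (Finset.univ.filter (fun x : Fin n → Bool => g x (Sum.inr i) = false)).card
          = 2 ^ (n - K) := by
        rw [show (Finset.univ.filter (fun x : Fin n → Bool => g x (Sum.inr i) = false))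
            = Finset.univ.filter (fun x : Fin n → Bool => ∀ j, x (idx j) = bb j) from ?_]
        · exact card_filter_fixed idx hinj _
        apply Finset.filter_congr
        intro x _
        simp only [hg, Sum.elim_inr, hco x]
        rw [show (false : Bool) = ⊥ from rfl, Finset.sup_eq_bot_iff]
        constructor
        · intro h j
          exact (hxorF _ _).mp (h j (Finset.mem_univ j))
        · intro h j _
          exact (hxorF _ _).mpr (h j)
      have hct : (Finset.univ.filter (fun x : Fin n → Bool => g x (Sum.inr i) = true)).card
          = 2 ^ n - 2 ^ (n - K) := by
        have := hsum2 (Sum.inr i)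
        omega
      rw [hct, hcf, hPcast, hQcast, add_comm]
  -- combine
  have hbound : Real.log (((2:ℕ) ^ n : ℕ) : ℝ) ≤
      (m : ℝ) * Real.log 2 + (n : ℝ) * (Real.negMulLog P + Real.negMulLog (1 - P)) := by
    refine le_trans hmain ?_
    have h1 : (∑ a : ↥S, ∑ b : Bool,
        Real.negMulLog (((Finset.univ.filter
          (fun x : Fin n → Bool => g x (Sum.inl a) = b)).card : ℝ) / (((2:ℕ) ^ n : ℕ) : ℝ)))
        ≤ (m : ℝ) * Real.log 2 := by
      calc _ ≤ ∑ _a : ↥S, Real.log 2 := Finset.sum_le_sum (fun a _ => hpart1 a)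
        _ = (m : ℝ) * Real.log 2 := by
            rw [Finset.sum_const, Finset.card_univ, Fintype.card_coe, hS, nsmul_eq_mul]
    have h2 : (∑ i : Fin n, ∑ b : Bool,
        Real.negMulLog (((Finset.univ.filter
          (fun x : Fin n → Bool => g x (Sum.inr i) = b)).card : ℝ) / (((2:ℕ) ^ n : ℕ) : ℝ)))
        = (n : ℝ) * (Real.negMulLog P + Real.negMulLog (1 - P)) := by
      rw [Finset.sum_congr rfl (fun i _ => hpart2 i), Finset.sum_const, Finset.card_univ,
        Fintype.card_fin, nsmul_eq_mul]
    rw [h2]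
    exact add_le_add h1 (le_of_eq rfl)
  -- final arithmetic
  have hX : (0:ℝ) < (2:ℝ) ^ K - 1 := by
    have : (1:ℝ) < 2 ^ K := one_lt_pow₀ (by norm_num) (by omega)
    linarith
  have hlog2 : (0:ℝ) < Real.log 2 := Real.log_pos (by norm_num)
  have hlogP : Real.log P = -((K:ℝ) * Real.log 2) := by
    rw [hPdef, Real.log_inv, Real.log_pow]
  have h1P : (1:ℝ) - P = ((2:ℝ) ^ K - 1) / (2:ℝ) ^ K := by
    rw [hPdef]; field_simp
  have hlog1P : Real.log (1 - P) = Real.log ((2:ℝ) ^ K - 1) - (K:ℝ) * Real.log 2 := by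
    rw [h1P, Real.log_div (ne_of_gt hX) (by positivity), Real.log_pow]
  have hLHS : Real.log (((2:ℕ) ^ n : ℕ) : ℝ) = (n : ℝ) * Real.log 2 := by
    rw [hcast2n, Real.log_pow]
  rw [hLHS] at hbound
  simp only [Real.negMulLog, hlogP, hlog1P] at hbound
  set Q : ℝ := ((2:ℝ) ^ K - 1) / (2:ℝ) ^ K with hQdef
  have hQeq : (1:ℝ) - P = Q := h1P
  rw [hQeq] at hbound
  have hlogb : Real.logb 2 ((2:ℝ) ^ K - 1) = Real.log ((2:ℝ) ^ K - 1) / Real.log 2 := rfl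
  rw [ge_iff_le, hlogb]
  have hexpand : ((1 - (K:ℝ)) + Q * (Real.log ((2:ℝ) ^ K - 1) / Real.log 2)) * (n:ℝ)
        * Real.log 2
      = (n:ℝ) * Real.log 2 - (K:ℝ) * (n:ℝ) * Real.log 2
        + Q * Real.log ((2:ℝ) ^ K - 1) * (n:ℝ) := by
    field_simp
  have hPQ : P + Q = 1 := by rw [← hQeq]; ring
  refine le_of_mul_le_mul_right ?_ hlog2
  rw [hexpand]
  have hPQ' : (n:ℝ) * (K:ℝ) * Real.log 2 * (P + Q) = (n:ℝ) * (K:ℝ) * Real.log 2 := by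
    rw [hPQ]; ring
  linarith [hbound, hPQ']
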